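/- Let G be a finite group, let g ∈ G, and let k be a nonnegative integer. Then |G|^{2k-1} · Σ_{π ∈ Irr G} (dim π)^{1-2k} · χ_π(g) equals the number of tuples (x_1, y_1, …, x_k, y_k) ∈ G^{2k} such that [x_1,y_1]·[x_2,y_2]⋯[x_k,y_k] = g. -/

import Mathlib

open CategoryTheory Module
open scoped commutatorElement

noncomputable section
set_option linter.unusedSectionVars false
set_option maxHeartbeats 1000000
namespace FrobAux
open scoped Classical
variable {G : Type} [Group G] [Fintype G]
variable {V : Type} [AddCommGroup V] [Module ℂ V]

lemma rho_mul_apply (ρ : Representation ℂ G V) (a b : G) (x : V) :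
    ρ (a * b) x = ρ a (ρ b x) := by rw [map_mul]; rfl

/-- restriction of a representation to an invariant subspace -/
def subRep (ρ : Representation ℂ G V) (p : Submodule ℂ V)
    (hp : ∀ g : G, ∀ x ∈ p, ρ g x ∈ p) : Representation ℂ G p where
  toFun g := (ρ g).restrict (fun x hx => hp g x hx)
  map_one' := by ext x; simp [LinearMap.restrict_apply]
  map_mul' g h := by ext x; simp [LinearMap.restrict_apply]

@[simp] lemma subRep_apply (ρ : Representation ℂ G V) (p : Submodule ℂ V)
    (hp : ∀ g : G, ∀ x ∈ p, ρ g x ∈ p) (g : G) (x : p) :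
    (subRep ρ p hp g x : V) = ρ g x := rfl

/-- Maschke: an invariant subspace has an invariant complement. -/
lemma exists_invariant_compl (ρ : Representation ℂ G V) (p : Submodule ℂ V)
    (hp : ∀ g : G, ∀ x ∈ p, ρ g x ∈ p) :
    ∃ q : Submodule ℂ V, (∀ g : G, ∀ x ∈ q, ρ g x ∈ q) ∧ IsCompl p q := by
  obtain ⟨c, hc⟩ := Submodule.exists_isCompl p
  set π₀ : V →ₗ[ℂ] V := p.subtype ∘ₗ (p.projectionOnto c hc)
  have hπ₀mem : ∀ x, π₀ x ∈ p := fun x => (p.projectionOnto c hc x).2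
  have hπ₀id : ∀ x ∈ p, π₀ x = x := fun x hx => by
    simp [π₀, Submodule.projectionOnto_apply_left hc ⟨x, hx⟩]
  set N : ℂ := (Fintype.card G : ℂ)
  have hN : N ≠ 0 := Nat.cast_ne_zero.mpr Fintype.card_ne_zero
  set π : V →ₗ[ℂ] V := N⁻¹ • ∑ g : G, (ρ g) ∘ₗ π₀ ∘ₗ (ρ g⁻¹)
  have hmem : ∀ x, π x ∈ p := by
    intro x
    apply Submodule.smul_mem
    rw [LinearMap.sum_apply]
    exact Submodule.sum_mem _ fun g _ => hp g _ (hπ₀mem _)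
  have hid : ∀ x ∈ p, π x = x := by
    intro x hx
    have : ∀ g : G, ((ρ g) ∘ₗ π₀ ∘ₗ (ρ g⁻¹)) x = x := by
      intro g
      have h1 : ρ g⁻¹ x ∈ p := hp g⁻¹ x hx
      simp only [LinearMap.comp_apply, hπ₀id _ h1]
      have := LinearMap.congr_fun (ρ.map_mul g g⁻¹) x
      simp only [mul_inv_cancel, map_one, Module.End.one_apply, Module.End.mul_apply] at this
      exact this.symm
    simp only [π, LinearMap.smul_apply, LinearMap.sum_apply, this]
    rw [Finset.sum_const, Finset.card_univ, ← Nat.cast_smul_eq_nsmul ℂ, smul_smul,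
      inv_mul_cancel₀ hN, one_smul]
  have hequiv : ∀ h : G, (ρ h) ∘ₗ π = π ∘ₗ (ρ h) := by
    intro h
    ext x
    simp only [π, LinearMap.comp_apply, LinearMap.smul_apply, map_smul]
    congr 1
    rw [LinearMap.sum_apply, LinearMap.sum_apply, map_sum]
    refine Finset.sum_nbij' (fun g => h * g) (fun g => h⁻¹ * g) (by simp) (by simp)
      (by intro g _; group) (by intro g _; group) ?_
    intro g _
    simp only [LinearMap.comp_apply]
    rw [rho_mul_apply]
    congr 1
    have hg : (h * g)⁻¹ * h = g⁻¹ := by group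
    rw [← rho_mul_apply, hg]
  refine ⟨LinearMap.ker (π.codRestrict p hmem), ?_, ?_⟩
  · intro g x hx
    simp only [LinearMap.mem_ker] at hx ⊢
    have hx' : π x = 0 := congrArg Subtype.val hx
    apply Subtype.ext
    show π (ρ g x) = (0 : V)
    rw [← LinearMap.comp_apply, ← hequiv g, LinearMap.comp_apply, hx', map_zero]
  · exact LinearMap.isCompl_of_proj (fun x => Subtype.ext (hid x x.2))


/-- If a representation has no nontrivial invariant subspaces, it is simple as an object
of `FDRep ℂ G`. -/
lemma simple_of_irreducible [FiniteDimensional ℂ V] (ρ : Representation ℂ G V)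
    [Nontrivial V]
    (hirr : ∀ p : Submodule ℂ V, (∀ g : G, ∀ x ∈ p, ρ g x ∈ p) → p = ⊥ ∨ p = ⊤) :
    Simple (FDRep.of ρ) := by
  constructor
  intro Y f hf
  constructor
  · intro hiso h0
    have h0' : f.hom = 0 := congrArg Action.Hom.hom h0
    obtain ⟨x, hx⟩ := exists_ne (0 : V)
    have : x = 0 := by
      calc x = f.hom ((inv f).hom x) := by
              rw [show f.hom ((inv f).hom x) = ((inv f ≫ f).hom) x from rfl,
                IsIso.inv_hom_id]
              rfl
        _ = 0 := by rw [h0']; rfl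
    exact hx this
  · intro hne
    set φ : (Y : Type) →ₗ[ℂ] V := f.hom.hom.hom with hφ
    have hcomm : ∀ (g : G) (x : Y), φ (Y.ρ g x) = ρ g (φ x) := by
      intro g x
      have := congrArg (fun ψ => ψ.hom.hom x) (f.comm g)
      exact this
    have hφne : φ ≠ 0 := fun h => hne (by ext x; exact LinearMap.congr_fun h x)
    -- injectivity from Mono
    have hker : LinearMap.ker φ = ⊥ := by
      have hkinv : ∀ g : G, ∀ x ∈ LinearMap.ker φ, Y.ρ g x ∈ LinearMap.ker φ := by
        intro g x hx
        rw [LinearMap.mem_ker] at hx ⊢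
        rw [hcomm g x, hx, map_zero]
      set ι : FDRep.of (subRep Y.ρ (LinearMap.ker φ) hkinv) ⟶ Y :=
        ⟨FGModuleCat.ofHom (LinearMap.ker φ).subtype, by
          intro g
          ext x
          exact rfl⟩ with hι
      have hcomp : ι ≫ f = (0 : _ ⟶ FDRep.of ρ) := by
        ext x
        show φ ((LinearMap.ker φ).subtype x) = 0
        exact x.2
      have h0comp : (0 : FDRep.of (subRep Y.ρ (LinearMap.ker φ) hkinv) ⟶ Y) ≫ f = 0 := by
        simp
      have hι0 : ι = 0 := by
        have := hf.right_cancellation (f := f) ι 0 (hcomp.trans h0comp.symm)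
        exact this
      ext x
      simp only [Submodule.mem_bot]
      constructor
      · intro hx
        have : (LinearMap.ker φ).subtype ⟨x, hx⟩ = (0 : (Y : Type)) := by
          rw [show (LinearMap.ker φ).subtype = ι.hom.hom.hom from rfl, hι0]
          rfl
        simpa using this
      · intro hx; rw [hx]; exact (LinearMap.ker φ).zero_mem
    -- surjectivity from irreducibility
    have hrange : LinearMap.range φ = ⊤ := by
      rcases hirr (LinearMap.range φ) (by
        intro g x hx
        obtain ⟨y, rfl⟩ := hx
        exact ⟨Y.ρ g y, (hcomm g y)⟩) with h | h
      · exfalso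
        apply hφne
        ext x
        have : φ x ∈ LinearMap.range φ := ⟨x, rfl⟩
        rw [h] at this
        simpa using this
      · exact h
    -- build the inverse morphism
    have hbij : Function.Bijective φ :=
      ⟨LinearMap.ker_eq_bot.mp hker, LinearMap.range_eq_top.mp hrange⟩
    set e : (Y : Type) ≃ₗ[ℂ] V := LinearEquiv.ofBijective φ hbij with he
    have hecomm : ∀ (g : G) (x : V), e.symm (ρ g x) = Y.ρ g (e.symm x) := by
      intro g x
      apply hbij.1
      show φ _ = φ _
      rw [hcomm g (e.symm x)]
      have h1 : φ (e.symm (ρ g x)) = ρ g x := e.apply_symm_apply _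
      have h2 : φ (e.symm x) = x := e.apply_symm_apply _
      rw [h1, h2]
    set ginv : FDRep.of ρ ⟶ Y := ⟨FGModuleCat.ofHom (e.symm : V →ₗ[ℂ] (Y : Type)), by
      intro g
      ext x
      exact hecomm g x⟩ with hginv
    refine ⟨⟨ginv, ?_, ?_⟩⟩
    · ext x
      show e.symm (φ x) = x
      exact e.symm_apply_apply x
    · ext x
      show φ (e.symm x) = x
      exact e.apply_symm_apply x

-- trace splits over an invariant complement
lemma trace_split {V : Type} [AddCommGroup V] [Module ℂ V] [FiniteDimensional ℂ V]
    (f : V →ₗ[ℂ] V) (p q : Submodule ℂ V) (hpq : IsCompl p q)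
    (hp : ∀ x ∈ p, f x ∈ p) (hq : ∀ x ∈ q, f x ∈ q) :
    LinearMap.trace ℂ V f =
      LinearMap.trace ℂ p (f.restrict hp) + LinearMap.trace ℂ q (f.restrict hq) := by
  set N : Bool → Submodule ℂ V := fun b => cond b p q with hN
  have hintern : DirectSum.IsInternal N := by
    rw [DirectSum.isInternal_submodule_iff_isCompl N (i := true) (j := false) (by simp)
      (by ext b; cases b <;> simp)]
    exact hpq
  have hmaps : ∀ b, Set.MapsTo f (N b) (N b) := by
    intro b; cases b
    · exact fun x hx => hq x hx
    · exact fun x hx => hp x hx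
  rw [LinearMap.trace_eq_sum_trace_restrict hintern hmaps, Fintype.sum_bool]
  rfl

-- character of the regular representation
lemma char_regular (h : G) :
    LinearMap.trace ℂ (MonoidAlgebra ℂ G) ((Representation.ofMulAction ℂ G G) h) =
      if h = 1 then (Fintype.card G : ℂ) else 0 := by
  classical
  rw [LinearMap.trace_eq_matrix_trace ℂ (MonoidAlgebra.basis G ℂ)]
  rw [Matrix.trace]
  have hdiag : ∀ x : G, Matrix.diag
      ((LinearMap.toMatrix (MonoidAlgebra.basis G ℂ) (MonoidAlgebra.basis G ℂ))
        ((Representation.ofMulAction ℂ G G) h)) x = if h = 1 then 1 else 0 := by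
    intro x
    rw [Matrix.diag_apply, LinearMap.toMatrix_apply]
    simp only [MonoidAlgebra.basis_apply, Representation.ofMulAction_single]
    show MonoidAlgebra.coeff (MonoidAlgebra.single (h • x) (1:ℂ)) x = _
    rw [MonoidAlgebra.coeff_single, Finsupp.single_apply]
    congr 1
    simp only [smul_eq_mul, eq_iff_iff]
    constructor
    · intro hx; exact mul_right_cancel (hx.trans (one_mul x).symm)
    · intro hx; rw [hx, one_mul]
  rw [Finset.sum_congr rfl (fun x _ => hdiag x)]
  split <;> simp [Finset.card_univ]

variable {ι : Type} [Fintype ι]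

lemma decomp (π : ι → FDRep ℂ G)
    (hsurj : ∀ ρ : FDRep ℂ G, Simple ρ → ∃ i, Nonempty (ρ ≅ π i)) :
    ∀ (n : ℕ) (V : Type) [AddCommGroup V] [Module ℂ V] [FiniteDimensional ℂ V]
      (ρ : Representation ℂ G V), finrank ℂ V = n →
      ∃ m : ι → ℕ, ∀ h : G,
        LinearMap.trace ℂ V (ρ h) = ∑ i, (m i : ℂ) * (π i).character h := by
  intro n
  induction n using Nat.strong_induction_on with
  | _ n IH =>
  intro V _ _ _ ρ hn
  rcases Nat.eq_zero_or_pos n with h0 | hpos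
  · subst h0
    haveI : Subsingleton V := Module.finrank_zero_iff.mp hn
    refine ⟨fun _ => 0, fun h => ?_⟩
    have : ρ h = 0 := Subsingleton.elim _ _
    simp [this]
  · haveI : Nontrivial V := Module.nontrivial_of_finrank_pos (R := ℂ) (hn ▸ hpos)
    by_cases hirr : ∀ p : Submodule ℂ V, (∀ g : G, ∀ x ∈ p, ρ g x ∈ p) → p = ⊥ ∨ p = ⊤
    · haveI := simple_of_irreducible ρ hirr
      obtain ⟨i₀, ⟨iso⟩⟩ := hsurj (FDRep.of ρ) this
      refine ⟨fun i => if i = i₀ then 1 else 0, fun h => ?_⟩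
      have hc : LinearMap.trace ℂ V (ρ h) = (π i₀).character h :=
        congrFun (FDRep.char_iso iso) h
      rw [hc]
      simp [ite_mul]
    · push_neg at hirr
      obtain ⟨p, hpinv, hpbot, hptop⟩ := hirr
      obtain ⟨q, hqinv, hpq⟩ := exists_invariant_compl ρ p hpinv
      have hd : finrank ℂ p + finrank ℂ q = n := by
        rw [← hn]; exact Submodule.finrank_add_eq_of_isCompl hpq
      have hplt : finrank ℂ p < n := by
        rw [← hn]; exact Submodule.finrank_lt hptop
      have hqtop : q ≠ ⊤ := by
        intro hq
        apply hpbot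
        have := hpq.disjoint
        rw [hq] at this
        exact disjoint_top.mp this
      have hqlt : finrank ℂ q < n := by
        rw [← hn]; exact Submodule.finrank_lt hqtop
      obtain ⟨m₁, hm₁⟩ := IH _ hplt p (subRep ρ p hpinv) rfl
      obtain ⟨m₂, hm₂⟩ := IH _ hqlt q (subRep ρ q hqinv) rfl
      refine ⟨m₁ + m₂, fun h => ?_⟩
      rw [trace_split (ρ h) p q hpq (hpinv h) (hqinv h)]
      have e1 : LinearMap.trace ℂ p ((ρ h).restrict (hpinv h)) =
          ∑ i, (m₁ i : ℂ) * (π i).character h := hm₁ h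
      have e2 : LinearMap.trace ℂ q ((ρ h).restrict (hqinv h)) =
          ∑ i, (m₂ i : ℂ) * (π i).character h := hm₂ h
      rw [e1, e2, ← Finset.sum_add_distrib]
      refine Finset.sum_congr rfl (fun i _ => ?_)
      push_cast [Pi.add_apply]
      ring

lemma delta (π : ι → FDRep ℂ G)
    (hsimple : ∀ i, Simple (π i))
    (hinj : ∀ i j, Nonempty (π i ≅ π j) → i = j)
    (hsurj : ∀ ρ : FDRep ℂ G, Simple ρ → ∃ i, Nonempty (ρ ≅ π i)) (h : G) :
    ∑ i, (finrank ℂ (π i) : ℂ) * (π i).character h =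
      if h = 1 then (Fintype.card G : ℂ) else 0 := by
  have hN : (Fintype.card G : ℂ) ≠ 0 := Nat.cast_ne_zero.mpr Fintype.card_ne_zero
  haveI : Invertible (Fintype.card G : ℂ) := invertibleOfNonzero hN
  obtain ⟨m, hm⟩ := decomp π hsurj (finrank ℂ (MonoidAlgebra ℂ G)) (MonoidAlgebra ℂ G)
    (Representation.ofMulAction ℂ G G) rfl
  have key : ∀ i, (m i : ℂ) = (finrank ℂ (π i) : ℂ) := by
    intro i
    haveI := hsimple i
    -- pair the regular character with χ_i
    have orth : ∀ i' : ι, ∑ g : G, (π i').character g * (π i).character g⁻¹ =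
        if i' = i then (Fintype.card G : ℂ) else 0 := by
      intro i'
      haveI := hsimple i'
      have hN' : (Nat.card G : ℂ) ≠ 0 := by rwa [Nat.card_eq_fintype_card]
      letI : Invertible (Nat.card G : ℂ) := invertibleOfNonzero hN'
      have horth := FDRep.char_orthonormal (k := ℂ) (G := G) (π i') (π i)
      have horth2 : (Nat.card G : ℂ) *
          ((Nat.card G : ℂ)⁻¹ *
            ∑ g : G, (π i').character g * (π i).character g⁻¹) =
          (Nat.card G : ℂ) *
            (if Nonempty (π i' ≅ π i) then (1:ℂ) else 0) := by rw [horth]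
      rw [← mul_assoc, mul_inv_cancel₀ hN', one_mul, Nat.card_eq_fintype_card] at horth2
      have h3 : ∑ g : G, (π i').character g * (π i).character g⁻¹ =
          (Fintype.card G : ℂ) * (if Nonempty (π i' ≅ π i) then (1:ℂ) else 0) := horth2
      have hcast : (if Nonempty (π i' ≅ π i) then (1:ℂ) else 0) =
          if i' = i then (1:ℂ) else 0 :=
        if_congr ⟨fun hne => hinj _ _ hne, fun he => he ▸ ⟨Iso.refl _⟩⟩ rfl rfl
      rw [h3, hcast]
      split <;> simp
    have lhs1 : ∑ g : G, (LinearMap.trace ℂ (MonoidAlgebra ℂ G)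
        ((Representation.ofMulAction ℂ G G) g)) * (π i).character g⁻¹ =
        (Fintype.card G : ℂ) * (finrank ℂ (π i) : ℂ) := by
      rw [Finset.sum_congr rfl (fun g _ => by rw [char_regular g])]
      simp [ite_mul, inv_one]
    have lhs2 : ∑ g : G, (LinearMap.trace ℂ (MonoidAlgebra ℂ G)
        ((Representation.ofMulAction ℂ G G) g)) * (π i).character g⁻¹ =
        (Fintype.card G : ℂ) * (m i : ℂ) := by
      rw [Finset.sum_congr rfl (fun g _ => by rw [hm g, Finset.sum_mul])]
      rw [Finset.sum_comm]
      have inner : ∀ i', ∑ g : G, (m i' : ℂ) * (π i').character g * (π i).character g⁻¹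
          = if i' = i then (m i' : ℂ) * (Fintype.card G : ℂ) else 0 := by
        intro i'
        simp only [mul_assoc, ← Finset.mul_sum]
        rw [orth i']
        split <;> simp
      rw [Finset.sum_congr rfl (fun i' _ => inner i')]
      rw [Finset.sum_ite_eq' Finset.univ i (fun i' => (m i' : ℂ) * (Fintype.card G : ℂ))]
      simp [mul_comm]
    exact (mul_left_cancel₀ hN (lhs1.symm.trans lhs2)).symm
  rw [Finset.sum_congr rfl (fun i _ => by rw [← key i])]
  rw [← hm h, char_regular h]

lemma finrank_pos_of_simple (X : FDRep ℂ G) [Simple X] : 0 < finrank ℂ X := by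
  by_contra h
  push_neg at h
  haveI : Subsingleton (X : Type) := Module.finrank_zero_iff.mp (Nat.le_zero.mp h)
  apply CategoryTheory.id_nonzero X
  ext v
  exact Subsingleton.elim (α := (X : Type)) _ _

lemma trace_rho (V : FDRep ℂ G) (u : G) :
    LinearMap.trace ℂ (V : Type) (V.ρ u) = V.character u := rfl

lemma schur_scalar {X : FDRep ℂ G} [Simple X]
    (T : (X : Type) →ₗ[ℂ] (X : Type))
    (hT : ∀ (g : G) (v : X), T (X.ρ g v) = X.ρ g (T v)) :
    T = (LinearMap.trace ℂ X T / (finrank ℂ X : ℂ)) • LinearMap.id := by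
  have hd : (finrank ℂ X : ℂ) ≠ 0 :=
    Nat.cast_ne_zero.mpr (finrank_pos_of_simple X).ne'
  obtain ⟨c, hc⟩ := CategoryTheory.endomorphism_simple_eq_smul_id (𝕜 := ℂ) (X := X)
    (⟨FGModuleCat.ofHom T, fun g => by ext v; exact hT g v⟩ : X ⟶ X)
  have hT' : T = c • LinearMap.id := (congrArg (fun f : X ⟶ X => f.hom.hom.hom) hc).symm
  have htr : LinearMap.trace ℂ X T = c * (finrank ℂ X : ℂ) := by
    rw [hT', map_smul, LinearMap.trace_id, smul_eq_mul]
  rw [htr, mul_div_assoc, div_self hd, mul_one]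
  exact hT'

/-- orthogonality in multiplied form -/
lemma orth (π : ι → FDRep ℂ G) (hsimple : ∀ i, Simple (π i))
    (hinj : ∀ i j, Nonempty (π i ≅ π j) → i = j) (i i' : ι) :
    ∑ g : G, (π i').character g * (π i).character g⁻¹ =
      if i' = i then (Fintype.card G : ℂ) else 0 := by
  have hN : (Fintype.card G : ℂ) ≠ 0 := Nat.cast_ne_zero.mpr Fintype.card_ne_zero
  haveI := hsimple i
  haveI := hsimple i'
  have hN' : (Nat.card G : ℂ) ≠ 0 := by rwa [Nat.card_eq_fintype_card]
  letI : Invertible (Nat.card G : ℂ) := invertibleOfNonzero hN'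
  have horth := FDRep.char_orthonormal (k := ℂ) (G := G) (π i') (π i)
  have horth2 : (Nat.card G : ℂ) *
      ((Nat.card G : ℂ)⁻¹ *
        ∑ g : G, (π i').character g * (π i).character g⁻¹) =
      (Nat.card G : ℂ) *
        (if Nonempty (π i' ≅ π i) then (1:ℂ) else 0) := by rw [horth]
  rw [← mul_assoc, mul_inv_cancel₀ hN', one_mul, Nat.card_eq_fintype_card] at horth2
  have h3 : ∑ g : G, (π i').character g * (π i).character g⁻¹ =
      (Fintype.card G : ℂ) * (if Nonempty (π i' ≅ π i) then (1:ℂ) else 0) := horth2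
  have hcast : (if Nonempty (π i' ≅ π i) then (1:ℂ) else 0) =
      if i' = i then (1:ℂ) else 0 :=
    if_congr ⟨fun hne => hinj _ _ hne, fun he => he ▸ ⟨Iso.refl _⟩⟩ rfl rfl
  rw [h3, hcast]
  split <;> simp

lemma conv1 (π : ι → FDRep ℂ G) (hsimple : ∀ i, Simple (π i)) (i : ι) (a b : G) :
    ∑ x : G, (π i).character (x * a * x⁻¹ * b) =
      (Fintype.card G : ℂ) / (finrank ℂ (π i) : ℂ) *
        ((π i).character a * (π i).character b) := by
  haveI := hsimple i
  set T : ((π i) : Type) →ₗ[ℂ] ((π i) : Type) :=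
    ∑ x : G, (π i).ρ (x * a * x⁻¹) with hTdef
  have hT : ∀ (g : G) (v : (π i)), T ((π i).ρ g v) = (π i).ρ g (T v) := by
    intro g v
    simp only [hTdef, LinearMap.sum_apply, map_sum]
    refine Finset.sum_nbij' (fun x => g⁻¹ * x) (fun x => g * x) (by simp) (by simp)
      (by intro x _; group) (by intro x _; group) ?_
    intro x _
    rw [← rho_mul_apply, ← rho_mul_apply]
    congr 2
    group
  have hs := schur_scalar T hT
  have htr0 : LinearMap.trace ℂ (π i) T = ∑ x : G, (π i).character (x * a * x⁻¹) := by
    rw [hTdef, map_sum]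
    rfl
  have htr : LinearMap.trace ℂ (π i) T =
      (Fintype.card G : ℂ) * (π i).character a := by
    rw [htr0, Finset.sum_congr rfl (fun x _ => FDRep.char_conj (π i) a x),
      Finset.sum_const, Finset.card_univ, nsmul_eq_mul]
  calc ∑ x : G, (π i).character (x * a * x⁻¹ * b)
      = LinearMap.trace ℂ (π i) (T * (π i).ρ b) := by
        rw [hTdef, Finset.sum_mul, map_sum]
        refine Finset.sum_congr rfl (fun x _ => ?_)
        rw [← map_mul, trace_rho]
    _ = (Fintype.card G : ℂ) / (finrank ℂ (π i) : ℂ) *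
          ((π i).character a * (π i).character b) := by
        rw [hs, smul_mul_assoc, map_smul, smul_eq_mul, ← Module.End.one_eq_id, one_mul,
          htr, trace_rho]
        ring

lemma conv2 (π : ι → FDRep ℂ G) (hsimple : ∀ i, Simple (π i))
    (hinj : ∀ i j, Nonempty (π i ≅ π j) → i = j) (i : ι) (b : G) :
    ∑ y : G, (π i).character y * (π i).character (y⁻¹ * b) =
      (Fintype.card G : ℂ) / (finrank ℂ (π i) : ℂ) * (π i).character b := by
  haveI := hsimple i
  set S : ((π i) : Type) →ₗ[ℂ] ((π i) : Type) :=
    ∑ y : G, (π i).character y • (π i).ρ y⁻¹ with hSdef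
  have hS : ∀ (g : G) (v : (π i)), S ((π i).ρ g v) = (π i).ρ g (S v) := by
    intro g v
    simp only [hSdef, LinearMap.sum_apply, map_sum, LinearMap.smul_apply, map_smul]
    refine Finset.sum_nbij' (fun y => g⁻¹ * y * g) (fun y => g * y * g⁻¹) (by simp) (by simp)
      (by intro y _; group) (by intro y _; group) ?_
    intro y _
    congr 1
    · rw [show g⁻¹ * y * g = g⁻¹ * y * (g⁻¹)⁻¹ by group, FDRep.char_conj]
    · rw [← rho_mul_apply, ← rho_mul_apply]
      congr 2
      group
  have hs := schur_scalar S hS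
  have htr0 : LinearMap.trace ℂ (π i) S =
      ∑ y : G, (π i).character y * (π i).character y⁻¹ := by
    rw [hSdef, map_sum]
    exact Finset.sum_congr rfl (fun y _ => by rw [map_smul, smul_eq_mul, trace_rho])
  have htr : LinearMap.trace ℂ (π i) S = (Fintype.card G : ℂ) := by
    rw [htr0]
    have := orth π hsimple hinj i i
    simp only [if_pos rfl] at this
    exact this
  calc ∑ y : G, (π i).character y * (π i).character (y⁻¹ * b)
      = LinearMap.trace ℂ (π i) (S * (π i).ρ b) := by
        rw [hSdef, Finset.sum_mul, map_sum]
        refine Finset.sum_congr rfl (fun y _ => ?_)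
        rw [smul_mul_assoc, map_smul, smul_eq_mul, ← map_mul, trace_rho]
    _ = (Fintype.card G : ℂ) / (finrank ℂ (π i) : ℂ) * (π i).character b := by
        rw [hs, smul_mul_assoc, map_smul, smul_eq_mul, ← Module.End.one_eq_id, one_mul,
          htr, trace_rho]

lemma comm_sum (π : ι → FDRep ℂ G) (hsimple : ∀ i, Simple (π i))
    (hinj : ∀ i j, Nonempty (π i ≅ π j) → i = j) (i : ι) (b : G) :
    ∑ p : G × G, (π i).character (⁅p.1, p.2⁆ * b) =
      ((Fintype.card G : ℂ) / (finrank ℂ (π i) : ℂ)) ^ 2 * (π i).character b := by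
  rw [Fintype.sum_prod_type, Finset.sum_comm]
  have inner : ∀ y : G, ∑ x : G, (π i).character (⁅x, y⁆ * b) =
      (Fintype.card G : ℂ) / (finrank ℂ (π i) : ℂ) *
        ((π i).character y * (π i).character (y⁻¹ * b)) := by
    intro y
    rw [Finset.sum_congr rfl (fun x _ => by
      rw [commutatorElement_def, mul_assoc (x * y * x⁻¹)])]
    exact conv1 π hsimple i y (y⁻¹ * b)
  rw [Finset.sum_congr rfl (fun y _ => inner y), ← Finset.mul_sum,
    conv2 π hsimple hinj i b]
  ring

lemma power_sum_inv (π : ι → FDRep ℂ G) (hsimple : ∀ i, Simple (π i))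
    (hinj : ∀ i j, Nonempty (π i ≅ π j) → i = j) (i : ι) (k : ℕ) (b : G) :
    ∑ v : Fin k → G × G,
      (π i).character (((List.ofFn fun j => ⁅(v j).1, (v j).2⁆).prod)⁻¹ * b) =
      (((Fintype.card G : ℂ) / (finrank ℂ (π i) : ℂ)) ^ 2) ^ k * (π i).character b := by
  induction k generalizing b with
  | zero =>
    rw [Finset.sum_congr rfl (fun v _ => by
      rw [show (List.ofFn fun j : Fin 0 => ⁅(v j).1, (v j).2⁆) = [] from List.ofFn_zero,
        List.prod_nil, inv_one, one_mul])]
    rw [Finset.sum_const, Finset.card_univ]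
    simp
  | succ k IH =>
    rw [← Equiv.sum_comp (Fin.consEquiv fun _ => G × G)
      (fun v => (π i).character (((List.ofFn fun j => ⁅(v j).1, (v j).2⁆).prod)⁻¹ * b))]
    rw [Fintype.sum_prod_type]
    have hterm : ∀ (p : G × G) (w : Fin k → G × G),
        (π i).character (((List.ofFn fun j =>
            ⁅((Fin.consEquiv fun _ => G × G) (p, w) j).1,
             ((Fin.consEquiv fun _ => G × G) (p, w) j).2⁆).prod)⁻¹ * b) =
        (π i).character (((List.ofFn fun j => ⁅(w j).1, (w j).2⁆).prod)⁻¹ *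
          (⁅p.1, p.2⁆⁻¹ * b)) := by
      intro p w
      congr 1
      rw [List.ofFn_succ]
      simp only [Fin.consEquiv_apply, Fin.cons_zero, Fin.cons_succ]
      rw [List.prod_cons, mul_inv_rev, mul_assoc]
    rw [Finset.sum_congr rfl (fun p _ => Finset.sum_congr rfl (fun w _ => hterm p w))]
    rw [Finset.sum_congr rfl (fun p _ => IH (⁅p.1, p.2⁆⁻¹ * b))]
    rw [← Finset.mul_sum]
    have hswap : ∑ p : G × G, (π i).character (⁅p.1, p.2⁆⁻¹ * b) =
        ∑ p : G × G, (π i).character (⁅p.1, p.2⁆ * b) := by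
      rw [← Equiv.sum_comp (Equiv.prodComm G G)
        (fun p : G × G => (π i).character (⁅p.1, p.2⁆ * b))]
      refine Finset.sum_congr rfl (fun p _ => ?_)
      simp only [Equiv.prodComm_apply, Prod.fst_swap, Prod.snd_swap]
      rw [commutatorElement_inv]
    rw [hswap, comm_sum π hsimple hinj i b]
    ring

end FrobAux


open FrobAux in
/-- **Frobenius' formula with a fixed value** (Theorem 1.2). For a finite group `G`, `g ∈ G`
and a genus `k`, `|G|^{2k-1} · Σ_{π ∈ Irr G} (dim π)^{1-2k} · χ_π(g)` equals the number of
`2k`-tuples `(x₁,y₁,…,x_k,y_k)` in `G` with `[x₁,y₁]⋯[x_k,y_k] = g`. -/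
theorem stmt_1 {G : Type} [Group G] [Fintype G]
    {ι : Type} [Fintype ι] (π : ι → FDRep ℂ G)
    (hsimple : ∀ i, Simple (π i))
    (hinj : ∀ i j, Nonempty (π i ≅ π j) → i = j)
    (hsurj : ∀ ρ : FDRep ℂ G, Simple ρ → ∃ i, Nonempty (ρ ≅ π i))
    (g : G) (k : ℕ) :
    (Fintype.card G : ℂ) ^ (2 * (k : ℤ) - 1) *
      ∑ i, (finrank ℂ (π i) : ℂ) ^ (1 - 2 * (k : ℤ)) * (π i).character g =
    Nat.card {v : Fin k → G × G //
      (List.ofFn fun i => ⁅(v i).1, (v i).2⁆).prod = g} := by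
  classical
  have hN : (Fintype.card G : ℂ) ≠ 0 := Nat.cast_ne_zero.mpr Fintype.card_ne_zero
  have hd : ∀ i, (finrank ℂ (π i) : ℂ) ≠ 0 := fun i => by
    haveI := hsimple i
    exact Nat.cast_ne_zero.mpr (finrank_pos_of_simple (π i)).ne'
  -- the count as a sum of indicators
  have hcount : ((Nat.card {v : Fin k → G × G //
      (List.ofFn fun i => ⁅(v i).1, (v i).2⁆).prod = g} : ℕ) : ℂ) =
      ∑ v : Fin k → G × G,
        (if (List.ofFn fun i => ⁅(v i).1, (v i).2⁆).prod = g then (1 : ℂ) else 0) := by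
    rw [Nat.card_eq_fintype_card, Fintype.card_subtype, Finset.card_filter]
    push_cast
    rfl
  -- multiply by |G| and use the delta formula
  have key : (Fintype.card G : ℂ) * ((Nat.card {v : Fin k → G × G //
      (List.ofFn fun i => ⁅(v i).1, (v i).2⁆).prod = g} : ℕ) : ℂ) =
      ∑ i, (finrank ℂ (π i) : ℂ) *
        ((((Fintype.card G : ℂ) / (finrank ℂ (π i) : ℂ)) ^ 2) ^ k *
          (π i).character g) := by
    rw [hcount, Finset.mul_sum]
    have hterm : ∀ v : Fin k → G × G,
        (Fintype.card G : ℂ) *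
          (if (List.ofFn fun i => ⁅(v i).1, (v i).2⁆).prod = g then (1 : ℂ) else 0) =
        ∑ i, (finrank ℂ (π i) : ℂ) *
          (π i).character (((List.ofFn fun j => ⁅(v j).1, (v j).2⁆).prod)⁻¹ * g) := by
      intro v
      rw [delta π hsimple hinj hsurj (((List.ofFn fun j => ⁅(v j).1, (v j).2⁆).prod)⁻¹ * g)]
      rw [if_congr inv_mul_eq_one.symm rfl rfl]
      split <;> simp
    rw [Finset.sum_congr rfl (fun v _ => hterm v), Finset.sum_comm]
    refine Finset.sum_congr rfl (fun i _ => ?_)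
    rw [← Finset.mul_sum, power_sum_inv π hsimple hinj i k g]
  -- finish with field arithmetic
  apply mul_left_cancel₀ hN
  rw [key, Finset.mul_sum, Finset.mul_sum]
  refine (Finset.sum_congr rfl (fun i _ => ?_)).symm
  have h1 : ((Fintype.card G : ℂ)) ^ (2 * (k : ℤ) - 1) =
      (Fintype.card G : ℂ) ^ (2 * k) / (Fintype.card G : ℂ) := by
    rw [show 2 * (k : ℤ) - 1 = ((2 * k : ℕ) : ℤ) - 1 by push_cast; ring,
      zpow_sub₀ hN, zpow_natCast, zpow_one]
  have h2 : ((finrank ℂ (π i) : ℂ)) ^ (1 - 2 * (k : ℤ)) =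
      (finrank ℂ (π i) : ℂ) / (finrank ℂ (π i) : ℂ) ^ (2 * k) := by
    rw [show 1 - 2 * (k : ℤ) = 1 - ((2 * k : ℕ) : ℤ) by push_cast; ring,
      zpow_sub₀ (hd i), zpow_natCast, zpow_one]
  rw [h1, h2, ← pow_mul, div_pow]
  field_simp
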